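/- Let d_P, d_R be positive integers and let ρ be a Hermitian positive semidefinite matrix of trace 1 indexed by Fin d_P × Fin d_R, with eigenvalues p_1 ≥ p_2 ≥ … ≥ p_{d_P d_R} listed in decreasing order (with multiplicity), and set q_m = ∑_{j=1}^{d_R} p_{(m-1)d_R + j} for 1 ≤ m ≤ d_P. Then for every unitary matrix U of size d_P d_R, the von Neumann entropy of the partial trace over R of U ρ U† is at least -∑_{m=1}^{d_P} q_m log₂ q_m. -/

import Mathlib

open Finset ComplexOrder

/-- The index `(m-1)·d_R + j` (0-indexed: `m·d_R + j`) inside `Fin (d_P * d_R)`. -/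
def blockIdx {dP dR : ℕ} (m : Fin dP) (j : Fin dR) : Fin (dP * dR) :=
  ⟨m.val * dR + j.val, by
    calc m.val * dR + j.val < m.val * dR + dR := Nat.add_lt_add_left j.isLt _
      _ = (m.val + 1) * dR := by ring
      _ ≤ dP * dR := Nat.mul_le_mul_right _ m.isLt⟩

/-- Partial trace over the second (R) factor. -/
noncomputable def ptraceR (dP dR : ℕ)
    (M : Matrix (Fin dP × Fin dR) (Fin dP × Fin dR) ℂ) :
    Matrix (Fin dP) (Fin dP) ℂ :=
  fun m n => ∑ α : Fin dR, M (m, α) (n, α)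

/- ========== auxiliary lemmas ========== -/

lemma abel_id (c D : ℕ → ℝ) (n : ℕ) :
    ∑ i ∈ range (n+1), c i * (D (i+1) - D i)
      = c n * D (n+1) - c 0 * D 0 + ∑ k ∈ range n, (c k - c (k+1)) * D (k+1) := by
  induction n with
  | zero => simp; ring
  | succ n ih => rw [sum_range_succ, ih, sum_range_succ]; ring

lemma subgrad {a b : ℝ} (ha : 0 < a) (hb : 0 ≤ b) :
    a * Real.log a + (Real.log a + 1) * (b - a) ≤ b * Real.log b := by
  rcases eq_or_lt_of_le hb with h0 | hb
  · simp [← h0]; nlinarith [ha]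
  · have h1 : Real.log (a / b) ≤ a / b - 1 := Real.log_le_sub_one_of_pos (by positivity)
    rw [Real.log_div (ne_of_gt ha) (ne_of_gt hb)] at h1
    have h2 : b * (Real.log a - Real.log b) ≤ b * (a/b - 1) :=
      mul_le_mul_of_nonneg_left h1 (le_of_lt hb)
    rw [mul_sub, mul_sub, mul_div_cancel₀ _ (ne_of_gt hb)] at h2
    nlinarith

/-- Karamata-type inequality for the convex function `x log x`. -/
lemma karamata (n : ℕ) (a b : ℕ → ℝ)
    (ha0 : ∀ i < n, 0 ≤ a i) (hb0 : ∀ i < n, 0 ≤ b i)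
    (hant : ∀ i j, i ≤ j → j < n → a j ≤ a i)
    (hpre : ∀ k ≤ n, ∑ i ∈ range k, a i ≤ ∑ i ∈ range k, b i)
    (htot : ∑ i ∈ range n, a i = ∑ i ∈ range n, b i) :
    ∑ i ∈ range n, a i * Real.log (a i) ≤ ∑ i ∈ range n, b i * Real.log (b i) := by
  rcases Nat.eq_zero_or_pos n with rfl | hn
  · simp
  obtain ⟨N, rfl⟩ : ∃ N, n = N + 1 := ⟨n - 1, (Nat.succ_pred_eq_of_pos hn).symm⟩
  set n := N + 1
  set A : ℕ → ℝ := fun k => ∑ i ∈ range k, a i with hA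
  set B : ℕ → ℝ := fun k => ∑ i ∈ range k, b i with hB
  set D : ℕ → ℝ := fun k => B k - A k with hD
  set c : ℕ → ℝ := fun i => Real.log (a i) + 1 with hc
  have hDnn : ∀ k ≤ n, 0 ≤ D k := fun k hk => sub_nonneg.2 (hpre k hk)
  have hDn : D n = 0 := by simp only [hD, hA, hB, htot]; ring
  have hD0 : D 0 = 0 := by simp [hD, hA, hB]
  have hDz : ∀ i < n, a i = 0 → ∀ k, i ≤ k → k ≤ n → D k = 0 := by
    intro i hi hai k hik hkn
    have hAk : A k = A n := by
      have : ∀ j ∈ Ico k n, a j = 0 := by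
        intro j hj
        rw [mem_Ico] at hj
        exact le_antisymm (hai ▸ hant i j (le_trans hik hj.1) hj.2) (ha0 j hj.2)
      rw [hA]
      simp only []
      rw [← sum_range_add_sum_Ico a hkn, Finset.sum_eq_zero this, add_zero]
    have hBk : B k ≤ B n := by
      apply sum_le_sum_of_subset_of_nonneg (range_subset_range.2 hkn)
      intro j hj _; exact hb0 j (mem_range.1 hj)
    have : D k ≤ 0 := by simp [hD, hAk]; linarith [hDn, hBk, hAk]
    linarith [hDnn k hkn]
  have hbz : ∀ i < n, a i = 0 → b i = 0 := by
    intro i hi hai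
    have h1 : D i = 0 := hDz i hi hai i le_rfl (le_of_lt hi)
    have h2 : D (i+1) = 0 := hDz i hi hai (i+1) (Nat.le_succ i) hi
    have : B (i+1) - B i = A (i+1) - A i := by
      have := sub_eq_zero.1 h2; have := sub_eq_zero.1 h1
      simp [hD] at h1 h2; linarith
    simpa [hA, hB, sum_range_succ, hai] using this
  have step1 : ∑ i ∈ range n, (a i * Real.log (a i) + c i * (b i - a i))
      ≤ ∑ i ∈ range n, b i * Real.log (b i) := by
    apply sum_le_sum
    intro i hi
    rw [mem_range] at hi
    rcases lt_or_eq_of_le (ha0 i hi) with hpos | hzero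
    · exact subgrad hpos (hb0 i hi)
    · rw [← hzero, hbz i hi hzero.symm]; simp
  have step2 : 0 ≤ ∑ i ∈ range n, c i * (b i - a i) := by
    have hdiff : ∀ i, b i - a i = D (i+1) - D i := by
      intro i; simp [hD, hA, hB, sum_range_succ]; ring
    have : ∑ i ∈ range n, c i * (b i - a i) = ∑ i ∈ range n, c i * (D (i+1) - D i) :=
      Finset.sum_congr rfl fun i _ => by rw [hdiff]
    rw [this, abel_id, hDn, hD0]
    have : ∀ k ∈ range N, 0 ≤ (c k - c (k+1)) * D (k+1) := by
      intro k hk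
      rw [mem_range] at hk
      have hk1 : k + 1 < n := Nat.succ_lt_succ hk
      rcases lt_or_eq_of_le (ha0 (k+1) hk1) with hpos | hzero
      · apply mul_nonneg
        · have : Real.log (a (k+1)) ≤ Real.log (a k) :=
            Real.log_le_log hpos (hant k (k+1) (Nat.le_succ k) hk1)
          simp [hc]; linarith
        · exact hDnn (k+1) (le_of_lt hk1)
      · rw [hDz (k+1) hk1 hzero.symm (k+1) le_rfl (le_of_lt hk1), mul_zero]
    nlinarith [Finset.sum_nonneg this]
  calc ∑ i ∈ range n, a i * Real.log (a i)
      ≤ ∑ i ∈ range n, (a i * Real.log (a i) + c i * (b i - a i)) := by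
        rw [Finset.sum_add_distrib]
        linarith [step2]
    _ ≤ _ := step1

lemma card_filter_lt {N K : ℕ} (hK : K ≤ N) :
    (univ.filter fun i : Fin N => (i : ℕ) < K).card = K := by
  have : (univ.filter fun i : Fin N => (i : ℕ) < K) = Finset.map (Fin.castLEEmb hK) univ := by
    ext i
    simp only [mem_filter, mem_univ, true_and, mem_map, Fin.castLEEmb_apply]
    constructor
    · intro hi; exact ⟨⟨i, hi⟩, by ext; simp⟩
    · rintro ⟨j, rfl⟩; simpa using j.isLt
  rw [this, card_map, card_univ, Fintype.card_fin]

/-- LP bound: maximum of `∑ p i * t i` with `t ∈ [0,1]`, `∑ t = K` is the top-K sum. -/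
lemma lp_bound {N K : ℕ} (hK : K ≤ N) (p : Fin N → ℝ) (hp : Antitone p)
    (hp0 : ∀ i, 0 ≤ p i) (t : Fin N → ℝ) (ht0 : ∀ i, 0 ≤ t i) (ht1 : ∀ i, t i ≤ 1)
    (hsum : ∑ i, t i = K) :
    ∑ i, p i * t i ≤ ∑ i ∈ univ.filter fun i : Fin N => (i : ℕ) < K, p i := by
  rcases eq_or_lt_of_le hK with heq | hKN
  · have hfull : (univ.filter fun i : Fin N => (i : ℕ) < K) = univ := by
      ext i; simp only [mem_filter, mem_univ, true_and, iff_true]; omega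
    rw [hfull]
    apply sum_le_sum
    intro i _
    calc p i * t i ≤ p i * 1 := mul_le_mul_of_nonneg_left (ht1 i) (hp0 i)
      _ = p i := mul_one _
  · set κ : Fin N := ⟨K, hKN⟩ with hκ
    set S := univ.filter fun i : Fin N => (i : ℕ) < K with hS
    have hcard : S.card = K := card_filter_lt hK
    have key1 : ∑ i ∈ S, p i * t i - ∑ i ∈ S, p i ≤ p κ * (∑ i ∈ S, t i - K) := by
      have hterm : ∀ i ∈ S, p i * t i - p i ≤ p κ * (t i - 1) := by
        intro i hi
        rw [hS, mem_filter] at hi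
        have hpi : p κ ≤ p i := hp (by simp only [hκ, Fin.le_def]; omega)
        nlinarith [ht1 i]
      calc ∑ i ∈ S, p i * t i - ∑ i ∈ S, p i = ∑ i ∈ S, (p i * t i - p i) := by
            rw [sum_sub_distrib]
        _ ≤ ∑ i ∈ S, p κ * (t i - 1) := sum_le_sum hterm
        _ = p κ * (∑ i ∈ S, t i - K) := by
            rw [← mul_sum, sum_sub_distrib, sum_const, hcard, nsmul_eq_mul, mul_one]
    have key2 : ∑ i ∈ Sᶜ, p i * t i ≤ p κ * ∑ i ∈ Sᶜ, t i := by
      rw [mul_sum]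
      apply sum_le_sum
      intro i hi
      have hik : ¬ ((i : ℕ) < K) := by
        rw [hS, mem_compl, mem_filter] at hi
        simpa using hi
      have hpi : p i ≤ p κ := hp (by simp only [hκ, Fin.le_def]; omega)
      exact mul_le_mul_of_nonneg_right hpi (ht0 i)
    have hsum2 : ∑ i ∈ S, t i + ∑ i ∈ Sᶜ, t i = K := by
      rw [sum_add_sum_compl]; exact hsum
    have hsplit : ∑ i, p i * t i = ∑ i ∈ S, p i * t i + ∑ i ∈ Sᶜ, p i * t i :=
      (sum_add_sum_compl S _).symm
    have h3 : p κ * (∑ i ∈ S, t i - ↑K) + p κ * ∑ i ∈ Sᶜ, t i = 0 := by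
      rw [← mul_add, show (∑ i ∈ S, t i - (K:ℝ)) + ∑ i ∈ Sᶜ, t i = 0 by linarith, mul_zero]
    rw [hsplit]
    linarith [key1, key2, h3]

section MatrixAux
variable {dP dR : ℕ}

lemma ptrace_psd (M : Matrix (Fin dP × Fin dR) (Fin dP × Fin dR) ℂ) (hM : M.PosSemidef)
    (hH : (ptraceR dP dR M).IsHermitian) : (ptraceR dP dR M).PosSemidef := by
  refine Matrix.PosSemidef.of_dotProduct_mulVec_nonneg hH fun x => ?_
  set y : Fin dR → (Fin dP × Fin dR) → ℂ :=
    fun α r => if r.2 = α then x r.1 else 0 with hy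
  have key : ∀ α : Fin dR, (0:ℂ) ≤ dotProduct (star (y α)) (M.mulVec (y α)) :=
    fun α => hM.dotProduct_mulVec_nonneg _
  have hα : ∀ α, dotProduct (star (y α)) (M.mulVec (y α))
      = ∑ m, ∑ n, star (x m) * M (m,α) (n,α) * x n := by
    intro α
    simp only [dotProduct, Matrix.mulVec, Pi.star_apply, hy, Fintype.sum_prod_type]
    apply Finset.sum_congr rfl; intro m _
    simp only [apply_ite star, star_zero, ite_mul, zero_mul, mul_ite, mul_zero,
      Finset.sum_ite_eq', Finset.mem_univ, if_true, Finset.mul_sum]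
    rw [Finset.sum_comm]
    simp only [Finset.sum_ite_eq', Finset.mem_univ, if_true]
    apply Finset.sum_congr rfl; intro n _
    ring
  have hsum : dotProduct (star x) ((ptraceR dP dR M).mulVec x)
      = ∑ α : Fin dR, dotProduct (star (y α)) (M.mulVec (y α)) := by
    simp only [hα]
    simp only [dotProduct, Matrix.mulVec, Pi.star_apply, ptraceR]
    conv_rhs => rw [Finset.sum_comm]
    apply Finset.sum_congr rfl; intro m _
    calc star (x m) * ∑ n, (∑ β, M (m,β) (n,β)) * x n
        = ∑ n, ∑ β, star (x m) * M (m,β) (n,β) * x n := by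
          rw [Finset.mul_sum]
          apply Finset.sum_congr rfl; intro n _
          rw [Finset.sum_mul, Finset.mul_sum]
          apply Finset.sum_congr rfl; intro β _
          ring
      _ = ∑ β, ∑ n, star (x m) * M (m,β) (n,β) * x n := Finset.sum_comm
  rw [hsum]
  exact Finset.sum_nonneg fun α _ => key α

/-- The "kron with identity" matrix. -/
def kronI (W : Matrix (Fin dP) (Fin dP) ℂ) :
    Matrix (Fin dP × Fin dR) (Fin dP × Fin dR) ℂ :=
  fun r s => W r.1 s.1 * (if r.2 = s.2 then 1 else 0)

lemma kronI_star_mul (W : Matrix (Fin dP) (Fin dP) ℂ) (hW : star W * W = 1) :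
    star (kronI (dR := dR) W) * kronI W = 1 := by
  ext ⟨m, α⟩ ⟨n, β⟩
  simp only [Matrix.mul_apply, Matrix.star_apply, kronI, Fintype.sum_prod_type, star_mul',
    apply_ite star, star_one, star_zero]
  have h1 : ∀ a : Fin dP, (∑ b : Fin dR, (star (W a m) * if b = α then 1 else 0) *
      (W a n * if b = β then 1 else 0)) = (if α = β then 1 else 0) * (star (W a m) * W a n) := by
    intro a
    rcases eq_or_ne α β with rfl | hab
    · rw [Finset.sum_eq_single α]
      · simp
      · intro b _ hb; simp [hb]
      · simp
    · rw [Finset.sum_eq_zero, if_neg hab, zero_mul]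
      intro b _
      rcases eq_or_ne b α with rfl | h1
      · simp [hab]
      · simp [h1]
  simp only [h1]
  rw [← Finset.mul_sum]
  have h2 : ∑ a, star (W a m) * W a n = (star W * W) m n := by
    simp [Matrix.mul_apply, Matrix.star_apply]
  rw [h2, hW]
  by_cases hab : α = β <;> by_cases hmn : m = n <;>
    simp [Matrix.one_apply, Prod.ext_iff, hab, hmn]

lemma kronI_mul_star (W : Matrix (Fin dP) (Fin dP) ℂ) (hW : W * star W = 1) :
    kronI (dR := dR) W * star (kronI W) = 1 := by
  ext ⟨m, α⟩ ⟨n, β⟩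
  simp only [Matrix.mul_apply, Matrix.star_apply, kronI, Fintype.sum_prod_type, star_mul',
    apply_ite star, star_one, star_zero]
  have h1 : ∀ a : Fin dP, (∑ b : Fin dR, (W m a * if α = b then 1 else 0) *
      (star (W n a) * if β = b then 1 else 0)) = (if α = β then 1 else 0) * (W m a * star (W n a)) := by
    intro a
    rcases eq_or_ne α β with rfl | hab
    · rw [Finset.sum_eq_single α]
      · simp
      · intro b _ hb; simp [Ne.symm hb]
      · simp
    · rw [Finset.sum_eq_zero, if_neg hab, zero_mul]
      intro b _
      rcases eq_or_ne α b with rfl | h1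
      · simp [Ne.symm hab]
      · simp [h1]
  simp only [h1]
  rw [← Finset.mul_sum]
  have h2 : ∑ a, W m a * star (W n a) = (W * star W) m n := by
    simp [Matrix.mul_apply, Matrix.star_apply]
  rw [h2, hW]
  by_cases hab : α = β <;> by_cases hmn : m = n <;>
    simp [Matrix.one_apply, Prod.ext_iff, hab, hmn]

/-- conjugating the partial trace = partial trace of the conjugation by `kronI W`. -/
lemma conj_ptrace (W : Matrix (Fin dP) (Fin dP) ℂ)
    (M : Matrix (Fin dP × Fin dR) (Fin dP × Fin dR) ℂ) (m : Fin dP) :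
    (star W * ptraceR dP dR M * W) m m
      = ∑ α : Fin dR, (star (kronI (dR := dR) W) * M * kronI (dR := dR) W) (m, α) (m, α) := by
  have hR : ∀ α : Fin dR, (star (kronI (dR:=dR) W) * M * kronI (dR:=dR) W) (m,α) (m,α)
      = ∑ a, ∑ b, star (W a m) * M (a,α) (b,α) * W b m := by
    intro α
    simp only [Matrix.mul_apply, Matrix.star_apply, kronI, Fintype.sum_prod_type, star_mul',
      apply_ite star, star_one, star_zero, ite_mul, mul_ite, zero_mul, mul_zero, one_mul,
      mul_one, Finset.sum_ite_eq', Finset.sum_ite_eq, Finset.mem_univ, if_true,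
      Finset.sum_mul, Finset.mul_sum]
    rw [Finset.sum_comm]
  simp only [hR]
  simp only [Matrix.mul_apply, Matrix.star_apply, ptraceR]
  calc ∑ x : Fin dP, (∑ a : Fin dP, star (W a m) * ∑ α : Fin dR, M (a, α) (x, α)) * W x m
      = ∑ x : Fin dP, ∑ a : Fin dP, ∑ α : Fin dR, star (W a m) * M (a, α) (x, α) * W x m := by
        apply Finset.sum_congr rfl; intro x _
        rw [Finset.sum_mul]
        apply Finset.sum_congr rfl; intro a _
        rw [Finset.mul_sum, Finset.sum_mul]
    _ = ∑ x : Fin dP, ∑ α : Fin dR, ∑ a : Fin dP, star (W a m) * M (a, α) (x, α) * W x m := by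
        apply Finset.sum_congr rfl; intro x _
        exact Finset.sum_comm
    _ = ∑ α : Fin dR, ∑ x : Fin dP, ∑ a : Fin dP, star (W a m) * M (a, α) (x, α) * W x m :=
        Finset.sum_comm
    _ = ∑ α : Fin dR, ∑ a : Fin dP, ∑ x : Fin dP, star (W a m) * M (a, α) (x, α) * W x m := by
        apply Finset.sum_congr rfl; intro α _
        exact Finset.sum_comm

lemma blockIdx_eq (m : Fin dP) (j : Fin dR) : blockIdx m j = finProdFinEquiv (m, j) := by
  apply Fin.ext
  show m.val * dR + j.val = ((finProdFinEquiv (m, j) : Fin (dP * dR)) : ℕ)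
  simp [finProdFinEquiv, Fin.val_mk]
  ring

lemma block_sum (p : Fin (dP * dR) → ℝ) (k : ℕ) (hk : k ≤ dP) :
    ∑ m ∈ univ.filter (fun m : Fin dP => (m:ℕ) < k), ∑ j : Fin dR, p (blockIdx m j)
      = ∑ i ∈ univ.filter (fun i : Fin (dP*dR) => (i:ℕ) < k*dR), p i := by
  rw [← Finset.sum_product']
  apply Finset.sum_nbij' (fun mj => finProdFinEquiv mj) (fun i => finProdFinEquiv.symm i)
  · rintro ⟨m, j⟩ hm
    simp only [mem_product, mem_filter, mem_univ, true_and] at hm ⊢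
    rw [← blockIdx_eq]
    show m.val * dR + j.val < k * dR
    calc m.val * dR + j.val < m.val * dR + dR := Nat.add_lt_add_left j.isLt _
      _ = (m.val + 1) * dR := by ring
      _ ≤ k * dR := Nat.mul_le_mul_right _ hm.1
  · intro i hi
    simp only [mem_filter, mem_univ, true_and] at hi ⊢
    simp only [mem_product, mem_filter, mem_univ, true_and]
    -- need : (finProdFinEquiv.symm i).1 < k
    set mj := finProdFinEquiv.symm i with hmj
    have : finProdFinEquiv mj = i := Equiv.apply_symm_apply _ _
    rw [← this] at hi
    rw [← blockIdx_eq mj.1 mj.2] at hi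
    by_contra hcon
    simp only [and_true, not_lt] at hcon
    have : k * dR ≤ (mj.1 : ℕ) * dR := Nat.mul_le_mul_right _ hcon
    have h2 : (blockIdx mj.1 mj.2 : ℕ) = mj.1 * dR + mj.2 := rfl
    omega
  · intro mj _; exact Equiv.symm_apply_apply _ _
  · intro i _; exact Equiv.apply_symm_apply _ _
  · rintro ⟨m, j⟩ _
    rw [blockIdx_eq]

lemma sum_range_fin {n : ℕ} (f : Fin n → ℝ) (k : ℕ) (hk : k ≤ n) :
    ∑ i ∈ range k, (if hi : i < n then f ⟨i, hi⟩ else 0)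
      = ∑ i ∈ univ.filter (fun i : Fin n => (i:ℕ) < k), f i := by
  have h1 : (univ.filter fun i : Fin n => (i : ℕ) < k) = Finset.map (Fin.castLEEmb hk) univ := by
    ext i
    simp only [mem_filter, mem_univ, true_and, mem_map, Fin.castLEEmb_apply]
    constructor
    · intro hi; exact ⟨⟨i, hi⟩, by ext; simp⟩
    · rintro ⟨j, rfl⟩; simpa using j.isLt
  rw [h1, Finset.sum_map]
  rw [← Fin.sum_univ_eq_sum_range (fun i => if hi : i < n then f ⟨i, hi⟩ else 0) k]
  apply Finset.sum_congr rfl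
  intro j _
  rw [dif_pos (lt_of_lt_of_le j.isLt hk)]
  rfl

lemma trace_eq_sum_eigs {n : Type*} [Fintype n] [DecidableEq n] {A : Matrix n n ℂ}
    (hA : A.IsHermitian) : A.trace = ∑ i, (hA.eigenvalues i : ℂ) := by
  conv_lhs => rw [hA.spectral_theorem, Unitary.conjStarAlgAut_apply]
  rw [Matrix.trace_mul_cycle,
    show star (hA.eigenvectorUnitary : Matrix n n ℂ) * (hA.eigenvectorUnitary : Matrix n n ℂ)
        * Matrix.diagonal (RCLike.ofReal ∘ hA.eigenvalues)
      = Matrix.diagonal (RCLike.ofReal ∘ hA.eigenvalues) by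
        rw [(Unitary.mem_iff.mp hA.eigenvectorUnitary.2).1, Matrix.one_mul],
    Matrix.trace_diagonal]
  rfl

end MatrixAux

theorem stmt2 (dP dR : ℕ) (hdP : 0 < dP) (hdR : 0 < dR)
    (ρ : Matrix (Fin dP × Fin dR) (Fin dP × Fin dR) ℂ)
    (hρ : ρ.PosSemidef) (htr : ρ.trace = 1)
    -- `p` lists the eigenvalues of `ρ` with multiplicity, in decreasing order
    (p : Fin (dP * dR) → ℝ) (hmono : Antitone p)
    (hperm : ∃ e : Fin (dP * dR) ≃ (Fin dP × Fin dR),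
      ∀ i, p i = hρ.isHermitian.eigenvalues (e i))
    (q : Fin dP → ℝ) (hq : ∀ m, q m = ∑ j : Fin dR, p (blockIdx m j))
    (U : Matrix (Fin dP × Fin dR) (Fin dP × Fin dR) ℂ)
    (hU : U ∈ Matrix.unitaryGroup (Fin dP × Fin dR) ℂ)
    (h : (ptraceR dP dR (U * ρ * star U)).IsHermitian) :
    -∑ m, q m * Real.logb 2 (q m)
      ≤ -∑ i, h.eigenvalues i * Real.logb 2 (h.eigenvalues i) := by
  classical
  obtain ⟨e, he⟩ := hperm
  -- abbreviations
  have hH := hρ.isHermitian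
  set eig : Fin dP × Fin dR → ℝ := hH.eigenvalues with heigdef
  set lam : Fin dP → ℝ := h.eigenvalues with hlamdef
  set V : Matrix (Fin dP × Fin dR) (Fin dP × Fin dR) ℂ := (hH.eigenvectorUnitary : Matrix (Fin dP × Fin dR) (Fin dP × Fin dR) ℂ) with hVdef
  set W : Matrix (Fin dP) (Fin dP) ℂ := (h.eigenvectorUnitary : Matrix (Fin dP) (Fin dP) ℂ) with hWdef
  set X : Matrix (Fin dP × Fin dR) (Fin dP × Fin dR) ℂ := U * V with hXdef
  set Z : Matrix (Fin dP × Fin dR) (Fin dP × Fin dR) ℂ := kronI (dR := dR) W with hZdef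
  set G : Matrix (Fin dP × Fin dR) (Fin dP × Fin dR) ℂ := star Z * X with hGdef
  set Dg : Matrix (Fin dP × Fin dR) (Fin dP × Fin dR) ℂ :=
    Matrix.diagonal (RCLike.ofReal ∘ eig) with hDdef
  -- unitarity facts
  have hU1 : star U * U = 1 := (Unitary.mem_iff.mp hU).1
  have hU2 : U * star U = 1 := (Unitary.mem_iff.mp hU).2
  have hV1 : star V * V = 1 := (Unitary.mem_iff.mp hH.eigenvectorUnitary.2).1
  have hV2 : V * star V = 1 := (Unitary.mem_iff.mp hH.eigenvectorUnitary.2).2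
  have hW1 : star W * W = 1 := (Unitary.mem_iff.mp h.eigenvectorUnitary.2).1
  have hW2 : W * star W = 1 := (Unitary.mem_iff.mp h.eigenvectorUnitary.2).2
  have hX1 : star X * X = 1 := by
    rw [hXdef, StarMul.star_mul, Matrix.mul_assoc, ← Matrix.mul_assoc (star U) U V, hU1,
      Matrix.one_mul, hV1]
  have hX2 : X * star X = 1 := by
    rw [hXdef, StarMul.star_mul, Matrix.mul_assoc, ← Matrix.mul_assoc V (star V) (star U), hV2,
      Matrix.one_mul, hU2]
  have hZ1 : star Z * Z = 1 := kronI_star_mul W hW1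
  have hZ2 : Z * star Z = 1 := kronI_mul_star W hW2
  have hG1 : star G * G = 1 := by
    rw [hGdef, StarMul.star_mul, star_star, Matrix.mul_assoc,
      ← Matrix.mul_assoc Z (star Z) X, hZ2, Matrix.one_mul, hX1]
  have hG2 : G * star G = 1 := by
    rw [hGdef, StarMul.star_mul, star_star, Matrix.mul_assoc,
      ← Matrix.mul_assoc X (star X) Z, hX2, Matrix.one_mul, hZ1]
  -- column and row sums of |G|²
  have hcol : ∀ j, ∑ r : Fin dP × Fin dR, Complex.normSq (G r j) = 1 := by
    intro j
    have h1 : (star G * G) j j = 1 := by rw [hG1]; simp [Matrix.one_apply]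
    rw [Matrix.mul_apply] at h1
    have h2 : ∀ r, (star G) j r * G r j = (Complex.normSq (G r j) : ℂ) := by
      intro r
      rw [Matrix.star_apply, show (star (G r j) : ℂ) = (starRingEnd ℂ) (G r j) from rfl,
        Complex.normSq_eq_conj_mul_self]
    rw [Finset.sum_congr rfl fun r _ => h2 r] at h1
    exact_mod_cast h1
  have hrow : ∀ r, ∑ j : Fin dP × Fin dR, Complex.normSq (G r j) = 1 := by
    intro r
    have h1 : (G * star G) r r = 1 := by rw [hG2]; simp [Matrix.one_apply]
    rw [Matrix.mul_apply] at h1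
    have h2 : ∀ j, G r j * (star G) j r = (Complex.normSq (G r j) : ℂ) := by
      intro j
      rw [Matrix.star_apply, show (star (G r j) : ℂ) = (starRingEnd ℂ) (G r j) from rfl,
        Complex.mul_conj]
    rw [Finset.sum_congr rfl fun j _ => h2 j] at h1
    exact_mod_cast h1
  -- the UρU† matrix in spectral form
  have hM : U * ρ * star U = X * Dg * star X := by
    conv_lhs => rw [hH.spectral_theorem, Unitary.conjStarAlgAut_apply]
    rw [hXdef, StarMul.star_mul]
    simp only [Matrix.mul_assoc, hVdef, hDdef, heigdef]
  -- key eigenvalue identity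
  have hlamc : ∀ m, lam m = ∑ j : Fin dP × Fin dR, eig j * (∑ α, Complex.normSq (G (m,α) j)) := by
    intro m
    have h0 : (star W * ptraceR dP dR (U * ρ * star U) * W) m m = (lam m : ℂ) := by
      rw [hWdef, ← Unitary.conjStarAlgAut_star_apply (S := ℂ), h.conjStarAlgAut_star_eigenvectorUnitary]
      simp [Matrix.diagonal_apply_eq, hlamdef]
    have h1 := conj_ptrace (dR := dR) W (U * ρ * star U) m
    have h2 : star Z * (U * ρ * star U) * Z = G * Dg * star G := by
      have hsG : star G = star X * Z := by
        rw [hGdef, StarMul.star_mul, star_star]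
      rw [hM, hsG, hGdef]
      simp only [Matrix.mul_assoc]
    have h3 : ∀ (a : Fin dP × Fin dR), (G * Dg * star G) a a
        = ∑ j, (eig j : ℂ) * Complex.normSq (G a j) := by
      intro a
      rw [Matrix.mul_apply]
      apply Finset.sum_congr rfl
      intro j _
      rw [hDdef, Matrix.mul_diagonal, Matrix.star_apply]
      have : G a j * (RCLike.ofReal ∘ eig) j * star (G a j)
          = (RCLike.ofReal (eig j) : ℂ) * (G a j * star (G a j)) := by
        simp only [Function.comp_apply]; ring
      rw [this]
      rw [show star (G a j) = (starRingEnd ℂ) (G a j) from rfl, Complex.mul_conj]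
      norm_num
    have h4 : (lam m : ℂ) = ∑ α : Fin dR, ∑ j, (eig j : ℂ) * Complex.normSq (G (m,α) j) := by
      rw [← h0, h1]
      apply Finset.sum_congr rfl
      intro α _
      rw [h2, h3]
    rw [Finset.sum_comm] at h4
    have h5 : (lam m : ℂ) = ((∑ j : Fin dP × Fin dR,
        eig j * (∑ α, Complex.normSq (G (m,α) j)) : ℝ) : ℂ) := by
      rw [h4]
      push_cast
      apply Finset.sum_congr rfl
      intro j _
      rw [Finset.mul_sum]
    exact_mod_cast h5
  -- the classical transition matrix
  set c : Fin dP → (Fin dP × Fin dR) → ℝ :=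
    fun m j => ∑ α, Complex.normSq (G (m, α) j) with hcdef
  have hcapp : ∀ m j, c m j = ∑ α, Complex.normSq (G (m, α) j) := fun _ _ => rfl
  have hlamc' : ∀ m, lam m = ∑ j, eig j * c m j := by
    intro m; rw [hlamc m]
  have hc0 : ∀ m j, 0 ≤ c m j := fun m j =>
    Finset.sum_nonneg fun α _ => Complex.normSq_nonneg _
  have hccol : ∀ j, ∑ m, c m j = 1 := by
    intro j
    have hcj := hcol j
    rw [Fintype.sum_prod_type] at hcj
    exact hcj
  have hcrow : ∀ m, ∑ j, c m j = (dR : ℝ) := by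
    intro m
    rw [Finset.sum_congr rfl fun j (_ : j ∈ univ) => hcapp m j, Finset.sum_comm]
    rw [Finset.sum_congr rfl fun α (_ : α ∈ univ) => hrow (m, α)]
    simp
  -- nonnegativity
  have heig0 : ∀ j, 0 ≤ eig j := hρ.eigenvalues_nonneg
  have hp0 : ∀ i, 0 ≤ p i := fun i => (he i) ▸ heig0 (e i)
  have hq0 : ∀ m, 0 ≤ q m := fun m => (hq m) ▸ Finset.sum_nonneg fun j _ => hp0 _
  have hMpsd : (U * ρ * star U).PosSemidef := by
    have := hρ.mul_mul_conjTranspose_same U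
    rwa [← Matrix.star_eq_conjTranspose] at this
  have hσpsd : (ptraceR dP dR (U * ρ * star U)).PosSemidef := ptrace_psd _ hMpsd h
  have hlam0 : ∀ m, 0 ≤ lam m := fun m => hσpsd.eigenvalues_nonneg m
  -- traces
  have hsum_eig : ∑ j, eig j = 1 := by
    have ht := trace_eq_sum_eigs hH
    rw [htr] at ht
    exact_mod_cast ht.symm
  have htrσ : (ptraceR dP dR (U * ρ * star U)).trace = 1 := by
    have h1 : (ptraceR dP dR (U * ρ * star U)).trace = (U * ρ * star U).trace := by
      simp [Matrix.trace, ptraceR, Fintype.sum_prod_type, Matrix.diag]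
    rw [h1, Matrix.trace_mul_cycle, hU1, Matrix.one_mul, htr]
  have hsum_lam : ∑ m, lam m = 1 := by
    have ht := trace_eq_sum_eigs h
    rw [htrσ] at ht
    exact_mod_cast ht.symm
  have hsum_q : ∑ m, q m = 1 := by
    rw [Finset.sum_congr rfl fun m (_ : m ∈ univ) => hq m]
    have hfull : (univ.filter fun m : Fin dP => (m:ℕ) < dP) = univ := by
      ext m; simp [m.isLt]
    rw [← hfull, block_sum p dP le_rfl]
    have hfull2 : (univ.filter fun i : Fin (dP*dR) => (i:ℕ) < dP*dR) = univ := by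
      ext i; simp [i.isLt]
    rw [hfull2, Finset.sum_congr rfl fun i (_ : i ∈ univ) => he i, Equiv.sum_comp e eig]
    exact hsum_eig
  -- sorting the eigenvalues of the partial trace
  set π : Equiv.Perm (Fin dP) := Tuple.sort (fun m => -lam m) with hπdef
  have hanti : ∀ i j : Fin dP, i ≤ j → lam (π j) ≤ lam (π i) := by
    intro i j hij
    have hm := Tuple.monotone_sort (fun m => -lam m) hij
    simp only [Function.comp_apply] at hm
    rw [hπdef] at *
    linarith [hm]
  -- the ℕ-indexed sequences
  set aN : ℕ → ℝ := fun i => if hi : i < dP then lam (π ⟨i, hi⟩) else 0 with haNdef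
  set bN : ℕ → ℝ := fun i => if hi : i < dP then q ⟨i, hi⟩ else 0 with hbNdef
  have haconv : ∀ k, k ≤ dP → ∑ i ∈ range k, aN i
      = ∑ i ∈ univ.filter (fun i : Fin dP => (i:ℕ) < k), lam (π i) :=
    fun k hk => sum_range_fin (fun i => lam (π i)) k hk
  have hbconv : ∀ k, k ≤ dP → ∑ i ∈ range k, bN i
      = ∑ i ∈ univ.filter (fun i : Fin dP => (i:ℕ) < k), q i :=
    fun k hk => sum_range_fin q k hk
  -- majorization
  have hmaj : ∀ k, k ≤ dP → ∑ i ∈ range k, aN i ≤ ∑ i ∈ range k, bN i := by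
    intro k hk
    rw [haconv k hk, hbconv k hk]
    set S := univ.filter (fun i : Fin dP => (i:ℕ) < k) with hSdef
    set Sk := S.image π with hSkdef
    have h1 : ∑ i ∈ S, lam (π i) = ∑ m ∈ Sk, lam m :=
      (Finset.sum_image fun x _ y _ hxy => π.injective hxy).symm
    have hcardSk : Sk.card = k := by
      rw [hSkdef, Finset.card_image_of_injective _ π.injective, hSdef, card_filter_lt hk]
    set t : (Fin dP × Fin dR) → ℝ := fun j => ∑ m ∈ Sk, c m j with htdef
    have h2 : ∑ m ∈ Sk, lam m = ∑ j : Fin dP × Fin dR, eig j * t j := by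
      rw [Finset.sum_congr rfl fun m (_ : m ∈ Sk) => hlamc' m, Finset.sum_comm]
      exact Finset.sum_congr rfl fun j _ => (Finset.mul_sum _ _ _).symm
    have ht0 : ∀ j, 0 ≤ t j := fun j => Finset.sum_nonneg fun m _ => hc0 m j
    have ht1 : ∀ j, t j ≤ 1 := by
      intro j
      calc t j ≤ ∑ m, c m j :=
            Finset.sum_le_sum_of_subset_of_nonneg (Finset.subset_univ _)
              (fun m _ _ => hc0 m j)
        _ = 1 := hccol j
    have htsum : ∑ j, t j = ((k * dR : ℕ) : ℝ) := by
      rw [htdef]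
      simp only []
      rw [Finset.sum_comm]
      rw [Finset.sum_congr rfl fun m (_ : m ∈ Sk) => hcrow m]
      rw [Finset.sum_const, hcardSk, nsmul_eq_mul]
      push_cast
      ring
    have h3 : ∑ j : Fin dP × Fin dR, eig j * t j = ∑ i : Fin (dP*dR), p i * t (e i) := by
      rw [← Equiv.sum_comp e (fun j => eig j * t j)]
      exact Finset.sum_congr rfl fun i _ => by rw [he i]
    rw [h1, h2, h3]
    have hKle : k * dR ≤ dP * dR := Nat.mul_le_mul_right _ hk
    have htesum : ∑ i, t (e i) = ((k * dR : ℕ) : ℝ) := by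
      rw [Equiv.sum_comp e t]; exact htsum
    have hlp := lp_bound hKle p hmono hp0 (fun i => t (e i)) (fun i => ht0 _)
      (fun i => ht1 _) htesum
    refine le_trans hlp ?_
    rw [← block_sum p k hk]
    exact le_of_eq (Finset.sum_congr rfl fun m _ => (hq m).symm)
  -- totals agree
  have htot : ∑ i ∈ range dP, aN i = ∑ i ∈ range dP, bN i := by
    rw [haconv dP le_rfl, hbconv dP le_rfl]
    have hfull : (univ.filter fun m : Fin dP => (m:ℕ) < dP) = univ := by
      ext m; simp [m.isLt]
    rw [hfull, Equiv.sum_comp π lam, hsum_lam, hsum_q]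
  -- Karamata
  have hkar := karamata dP aN bN
    (fun i hi => by rw [haNdef]; simp only [dif_pos hi]; exact hlam0 _)
    (fun i hi => by rw [hbNdef]; simp only [dif_pos hi]; exact hq0 _)
    (fun i j hij hj => by
      have hi : i < dP := lt_of_le_of_lt hij hj
      rw [haNdef]; simp only [dif_pos hi, dif_pos hj]
      exact hanti ⟨i, hi⟩ ⟨j, hj⟩ hij)
    hmaj htot
  -- convert back to Fin sums
  have hL : ∑ i ∈ range dP, aN i * Real.log (aN i) = ∑ m, lam m * Real.log (lam m) := by
    rw [← Fin.sum_univ_eq_sum_range (fun i => aN i * Real.log (aN i)) dP]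
    rw [show ∑ m : Fin dP, aN ↑m * Real.log (aN ↑m)
        = ∑ m : Fin dP, lam (π m) * Real.log (lam (π m)) from
      Finset.sum_congr rfl fun m _ => by rw [haNdef]; simp only [dif_pos m.isLt, Fin.eta]]
    exact Equiv.sum_comp π (fun m => lam m * Real.log (lam m))
  have hR : ∑ i ∈ range dP, bN i * Real.log (bN i) = ∑ m, q m * Real.log (q m) := by
    rw [← Fin.sum_univ_eq_sum_range (fun i => bN i * Real.log (bN i)) dP]
    exact Finset.sum_congr rfl fun m _ => by
      rw [hbNdef]; simp only [dif_pos m.isLt, Fin.eta]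
  rw [hL, hR] at hkar
  -- conclude
  have hlog2 : (0:ℝ) < Real.log 2 := Real.log_pos one_lt_two
  have hfin : ∑ m, lam m * Real.logb 2 (lam m) ≤ ∑ m, q m * Real.logb 2 (q m) := by
    simp only [Real.logb]
    calc ∑ m, lam m * (Real.log (lam m) / Real.log 2)
        = (∑ m, lam m * Real.log (lam m)) / Real.log 2 := by
          rw [Finset.sum_div]
          exact Finset.sum_congr rfl fun m _ => by ring
      _ ≤ (∑ m, q m * Real.log (q m)) / Real.log 2 := by
          gcongr
      _ = ∑ m, q m * (Real.log (q m) / Real.log 2) := by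
          rw [Finset.sum_div]
          exact Finset.sum_congr rfl fun m _ => by ring
  exact neg_le_neg hfin
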